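/- For the filter function μ(λ) = β(λ) + iγ(λ) with ω > 0, T = 2π/ω, if |λ − ω|/ω ≤ 1/2 then |μ(λ)| ≤ 1 − (15/32)((λ − ω)/ω)². -/

import Mathlib

open Real MeasureTheory intervalIntegral

lemma intC (a T : ℝ) (ha : a ≠ 0) : ∫ t in (0:ℝ)..T, Real.cos (a*t) = Real.sin (a*T)/a := by
  rw [intervalIntegral.integral_comp_mul_left Real.cos ha]
  simp [integral_cos, div_eq_inv_mul]

lemma intS (a T : ℝ) (ha : a ≠ 0) : ∫ t in (0:ℝ)..T, Real.sin (a*t) = (1 - Real.cos (a*T))/a := by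
  rw [intervalIntegral.integral_comp_mul_left Real.sin ha]
  simp [integral_sin, div_eq_inv_mul, mul_sub]

lemma intCC (ω lam T : ℝ) (h1 : lam - ω ≠ 0) (h2 : lam + ω ≠ 0) :
    ∫ t in (0:ℝ)..T, Real.cos (ω*t) * Real.cos (lam*t)
      = Real.sin ((lam-ω)*T)/(2*(lam-ω)) + Real.sin ((lam+ω)*T)/(2*(lam+ω)) := by
  have key : ∀ t : ℝ, Real.cos (ω*t) * Real.cos (lam*t)
      = Real.cos ((lam-ω)*t)/2 + Real.cos ((lam+ω)*t)/2 := by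
    intro t
    rw [show (lam-ω)*t = lam*t - ω*t by ring, show (lam+ω)*t = lam*t + ω*t by ring,
        Real.cos_sub, Real.cos_add]; ring
  simp_rw [key]
  rw [intervalIntegral.integral_add ((by fun_prop : Continuous fun t : ℝ => Real.cos ((lam-ω)*t)/2).intervalIntegrable _ _) ((by fun_prop : Continuous fun t : ℝ => Real.cos ((lam+ω)*t)/2).intervalIntegrable _ _),
      intervalIntegral.integral_div, intervalIntegral.integral_div, intC _ _ h1, intC _ _ h2]
  field_simp

lemma intCS (ω lam T : ℝ) (h1 : lam - ω ≠ 0) (h2 : lam + ω ≠ 0) :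
    ∫ t in (0:ℝ)..T, Real.cos (ω*t) * Real.sin (lam*t)
      = (1 - Real.cos ((lam-ω)*T))/(2*(lam-ω)) + (1 - Real.cos ((lam+ω)*T))/(2*(lam+ω)) := by
  have key : ∀ t : ℝ, Real.cos (ω*t) * Real.sin (lam*t)
      = Real.sin ((lam-ω)*t)/2 + Real.sin ((lam+ω)*t)/2 := by
    intro t
    rw [show (lam-ω)*t = lam*t - ω*t by ring, show (lam+ω)*t = lam*t + ω*t by ring,
        Real.sin_sub, Real.sin_add]; ring
  simp_rw [key]
  rw [intervalIntegral.integral_add ((by fun_prop : Continuous fun t : ℝ => Real.sin ((lam-ω)*t)/2).intervalIntegrable _ _) ((by fun_prop : Continuous fun t : ℝ => Real.sin ((lam+ω)*t)/2).intervalIntegrable _ _),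
      intervalIntegral.integral_div, intervalIntegral.integral_div, intS _ _ h1, intS _ _ h2]
  field_simp

lemma sin_le_poly {y : ℝ} (h0 : 0 ≤ y) (h2 : y ≤ 1.6) :
    Real.sin y ≤ y*(1 - y^2/8 + 5*y^4/1536) := by
  have hy2 : |y/2| ≤ 1 := by rw [abs_of_nonneg (by linarith)]; linarith
  have hcb := Real.cos_bound hy2
  have hcos_le : Real.cos (y/2) ≤ 1 - (y/2)^2/2 + (y/2)^4*(5/96) := by
    have := (abs_le.1 hcb).2
    rw [abs_of_nonneg (by linarith)] at this
    linarith
  have hcos_nonneg : 0 ≤ Real.cos (y/2) := by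
    apply Real.cos_nonneg_of_mem_Icc
    constructor
    · linarith [Real.pi_gt_three]
    · linarith [Real.pi_gt_three]
  have hsin_le : Real.sin (y/2) ≤ y/2 := Real.sin_le (by linarith)
  have h : Real.sin y = 2 * Real.sin (y/2) * Real.cos (y/2) := by
    rw [← Real.sin_two_mul]; ring_nf
  rw [h]
  calc 2 * Real.sin (y/2) * Real.cos (y/2) ≤ 2 * (y/2) * Real.cos (y/2) := by nlinarith
    _ ≤ 2 * (y/2) * (1 - (y/2)^2/2 + (y/2)^4*(5/96)) := by nlinarith
    _ = y*(1 - y^2/8 + 5*y^4/1536) := by ring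

set_option maxHeartbeats 1000000 in
lemma key_ineq (u : ℝ) (hu0 : u ≠ 0) (hu : |u| ≤ 1/2) :
    (3*(1+u)^2+1) * |Real.sin (π*u)| ≤ (2*π*(1+u)*(abs u)*(2+u)) * (1 - (15/32)*u^2) := by
  have hul := (abs_le.1 hu).1
  have hur := (abs_le.1 hu).2
  have hv0 : 0 < |u| := abs_pos.2 hu0
  have hπ1 : 3.141 ≤ π := by linarith [Real.pi_gt_d6]
  have hπ2 : π ≤ 3.15 := by linarith [Real.pi_lt_d2]
  have hπs : (9.8658:ℝ) ≤ π^2 := by nlinarith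
  have hπs2 : π^2 ≤ 9.9225 := by nlinarith
  have hπq : π^4 ≤ 98.5 := by nlinarith [mul_le_mul hπs2 hπs2 (by positivity) (by norm_num : (0:ℝ) ≤ 9.9225)]
  have hsin : |Real.sin (π*u)| = Real.sin (π*|u|) := by
    rcases le_or_gt 0 u with h|h
    · rw [abs_of_nonneg h, abs_of_nonneg (Real.sin_nonneg_of_nonneg_of_le_pi
        (mul_nonneg Real.pi_pos.le h) (by nlinarith [Real.pi_pos]))]
    · have e : Real.sin (π*u) = - Real.sin (π * -u) := by
        rw [mul_neg, Real.sin_neg, neg_neg]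
      rw [abs_of_neg h, e, abs_neg, abs_of_nonneg]
      exact Real.sin_nonneg_of_nonneg_of_le_pi (by nlinarith [Real.pi_pos])
        (by nlinarith [Real.pi_pos])
  rw [hsin]
  set v := |u| with hvdef
  have hv2 : v^2 = u^2 := sq_abs u
  have hvh : v ≤ 1/2 := hu
  have hA7 : (7:ℝ)/4 ≤ 3*(1+u)^2+1 := by nlinarith
  have hA0 : (0:ℝ) < 3*(1+u)^2+1 := by nlinarith
  have hPoly := sin_le_poly (y := π*v) (by positivity) (by nlinarith)
  have hc : 5*π^4*v^2/1536 ≤ 0.0802 := by nlinarith [sq_nonneg v]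
  have hd : (0.764:ℝ) ≤ π^2/8 - 15/32 := by nlinarith
  have hcA := mul_le_mul_of_nonneg_left hc hA0.le
  have hdA := mul_le_mul_of_nonneg_left hd hA0.le
  have h3 : (7:ℝ)/4*(0.6838:ℝ) ≤ (3*(1+u)^2+1)*(0.6838:ℝ) :=
    mul_le_mul_of_nonneg_right hA7 (by norm_num)
  have hmain : 0 ≤ (3*(1+u)^2+1)*(π^2/8 - 15/32) - (3*(1+u)^2+1)*(5*π^4*v^2/1536)
      - 1 + 15*v^2/32 := by nlinarith [sq_nonneg v]
  have hG : (3*(1+u)^2+1)*(1 - (π*v)^2/8 + 5*(π*v)^4/1536)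
      ≤ ((3*(1+u)^2+1) - v^2)*(1 - 15*v^2/32) := by
    nlinarith [mul_nonneg hmain (sq_nonneg v)]
  calc (3*(1+u)^2+1) * Real.sin (π*v)
      ≤ (3*(1+u)^2+1) * ((π*v)*(1 - (π*v)^2/8 + 5*(π*v)^4/1536)) :=
        mul_le_mul_of_nonneg_left hPoly hA0.le
    _ = (π*v) * ((3*(1+u)^2+1)*(1 - (π*v)^2/8 + 5*(π*v)^4/1536)) := by ring
    _ ≤ (π*v) * (((3*(1+u)^2+1) - v^2)*(1 - 15*v^2/32)) :=
        mul_le_mul_of_nonneg_left hG (by positivity)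
    _ = 2*π*(1+u)*v*(2+u) * (1 - (15/32)*u^2) := by rw [hv2]; ring

lemma intBeta (ω lam T : ℝ) (h1 : lam - ω ≠ 0) (h2 : lam + ω ≠ 0) (h3 : lam ≠ 0) :
    ∫ t in (0:ℝ)..T, (Real.cos (ω*t) - 1/4) * Real.cos (lam*t)
      = Real.sin ((lam-ω)*T)/(2*(lam-ω)) + Real.sin ((lam+ω)*T)/(2*(lam+ω))
        - Real.sin (lam*T)/(4*lam) := by
  have key : ∀ t : ℝ, (Real.cos (ω*t) - 1/4) * Real.cos (lam*t)
      = Real.cos (ω*t)*Real.cos (lam*t) - (1/4) * Real.cos (lam*t) := fun t => by ring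
  simp_rw [key]
  rw [intervalIntegral.integral_sub
      ((by fun_prop : Continuous fun t : ℝ => Real.cos (ω*t)*Real.cos (lam*t)).intervalIntegrable _ _)
      ((by fun_prop : Continuous fun t : ℝ => (1/4 : ℝ) * Real.cos (lam*t)).intervalIntegrable _ _),
    intervalIntegral.integral_const_mul, intCC ω lam T h1 h2, intC lam T h3]
  field_simp

lemma intGamma (ω lam T : ℝ) (h1 : lam - ω ≠ 0) (h2 : lam + ω ≠ 0) (h3 : lam ≠ 0) :
    ∫ t in (0:ℝ)..T, (Real.cos (ω*t) - 1/4) * Real.sin (lam*t)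
      = (1 - Real.cos ((lam-ω)*T))/(2*(lam-ω)) + (1 - Real.cos ((lam+ω)*T))/(2*(lam+ω))
        - (1 - Real.cos (lam*T))/(4*lam) := by
  have key : ∀ t : ℝ, (Real.cos (ω*t) - 1/4) * Real.sin (lam*t)
      = Real.cos (ω*t)*Real.sin (lam*t) - (1/4) * Real.sin (lam*t) := fun t => by ring
  simp_rw [key]
  rw [intervalIntegral.integral_sub
      ((by fun_prop : Continuous fun t : ℝ => Real.cos (ω*t)*Real.sin (lam*t)).intervalIntegrable _ _)
      ((by fun_prop : Continuous fun t : ℝ => (1/4 : ℝ) * Real.sin (lam*t)).intervalIntegrable _ _),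
    intervalIntegral.integral_const_mul, intCS ω lam T h1 h2, intS lam T h3]
  field_simp

lemma intBetaEq (ω T : ℝ) (hω : ω ≠ 0) :
    ∫ t in (0:ℝ)..T, (Real.cos (ω*t) - 1/4) * Real.cos (ω*t)
      = T/2 + Real.sin ((2*ω)*T)/(4*ω) - Real.sin (ω*T)/(4*ω) := by
  have key : ∀ t : ℝ, (Real.cos (ω*t) - 1/4) * Real.cos (ω*t)
      = (1/2 + Real.cos ((2*ω)*t)/2) - (1/4) * Real.cos (ω*t) := by
    intro t
    have h := Real.cos_sq (ω*t)
    rw [show 2*(ω*t) = (2*ω)*t by ring] at h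
    rw [← h]; ring
  simp_rw [key]
  rw [intervalIntegral.integral_sub
      ((by fun_prop : Continuous fun t : ℝ => (1/2 + Real.cos ((2*ω)*t)/2)).intervalIntegrable _ _)
      ((by fun_prop : Continuous fun t : ℝ => (1/4 : ℝ) * Real.cos (ω*t)).intervalIntegrable _ _),
    intervalIntegral.integral_add
      ((by fun_prop : Continuous fun _ : ℝ => (1/2:ℝ)).intervalIntegrable _ _)
      ((by fun_prop : Continuous fun t : ℝ => Real.cos ((2*ω)*t)/2).intervalIntegrable _ _)]
  have e1 : (∫ t in (0:ℝ)..T, Real.cos ((2*ω)*t)/2)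
      = (∫ t in (0:ℝ)..T, Real.cos ((2*ω)*t))/2 := intervalIntegral.integral_div _ _
  have e2 : (∫ _ in (0:ℝ)..T, (1/2:ℝ)) = T * (1/2) := by
    rw [intervalIntegral.integral_const]; simp
  rw [e1, e2, intervalIntegral.integral_const_mul, intC (2*ω) T (by simpa using hω),
    intC ω T hω]
  field_simp; ring

lemma intGammaEq (ω T : ℝ) (hω : ω ≠ 0) :
    ∫ t in (0:ℝ)..T, (Real.cos (ω*t) - 1/4) * Real.sin (ω*t)
      = (1 - Real.cos ((2*ω)*T))/(4*ω) - (1 - Real.cos (ω*T))/(4*ω) := by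
  have key : ∀ t : ℝ, (Real.cos (ω*t) - 1/4) * Real.sin (ω*t)
      = Real.sin ((2*ω)*t)/2 - (1/4) * Real.sin (ω*t) := by
    intro t
    have h := Real.sin_two_mul (ω*t)
    rw [show 2*(ω*t) = (2*ω)*t by ring] at h
    rw [h]; ring
  simp_rw [key]
  rw [intervalIntegral.integral_sub
      ((by fun_prop : Continuous fun t : ℝ => Real.sin ((2*ω)*t)/2).intervalIntegrable _ _)
      ((by fun_prop : Continuous fun t : ℝ => (1/4 : ℝ) * Real.sin (ω*t)).intervalIntegrable _ _),
    intervalIntegral.integral_div, intervalIntegral.integral_const_mul,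
    intS (2*ω) T (by simpa using hω), intS ω T hω]
  field_simp; ring

set_option maxHeartbeats 1000000 in
theorem filter_bound_near (ω : ℝ) (hω : 0 < ω) (T : ℝ) (hT : T = 2 * π / ω)
    (β γ : ℝ → ℝ)
    (hβ : ∀ lam, β lam = (2 / T) * ∫ t in (0:ℝ)..T,
        (Real.cos (ω * t) - 1 / 4) * Real.cos (lam * t))
    (hγ : ∀ lam, γ lam = (2 / T) * ∫ t in (0:ℝ)..T,
        (Real.cos (ω * t) - 1 / 4) * Real.sin (lam * t))
    (μ : ℝ → ℂ) (hμ : ∀ lam, μ lam = (β lam : ℂ) + Complex.I * (γ lam : ℂ))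
    (lam : ℝ) (hlam : 0 ≤ lam) (hnear : |lam - ω| / ω ≤ 1 / 2) :
    ‖μ lam‖ ≤ 1 - (15 / 32) * ((lam - ω) / ω) ^ 2 := by
  have hω' : ω ≠ 0 := hω.ne'
  have hT0 : 0 < T := by rw [hT]; positivity
  have hωT : ω * T = 2 * π := by rw [hT]; field_simp
  have habs : |lam - ω| ≤ ω * (1/2) := by
    rw [div_le_iff₀ hω] at hnear; linarith [hnear]
  have hlb : ω/2 ≤ lam := by have := (abs_le.1 habs).1; linarith
  have hub : lam ≤ 3*ω/2 := by have := (abs_le.1 habs).2; linarith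
  have hlam0 : 0 < lam := by linarith
  by_cases hcase : lam = ω
  · have hβv : β lam = 1 := by
      rw [hβ, hcase, intBetaEq ω T hω',
        show (2:ℝ)*ω*T = 2*π + 2*π by rw [two_mul, ← hωT]; ring, hωT,
        Real.sin_add_two_pi, Real.sin_two_pi]
      field_simp
      ring
    have hγv : γ lam = 0 := by
      rw [hγ, hcase, intGammaEq ω T hω',
        show (2:ℝ)*ω*T = 2*π + 2*π by rw [two_mul, ← hωT]; ring, hωT,
        Real.cos_add_two_pi, Real.cos_two_pi]
      simp
    rw [hμ, hβv, hγv, hcase]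
    simp
  · -- main case
    have h1 : lam - ω ≠ 0 := sub_ne_zero.2 hcase
    have h2 : lam + ω ≠ 0 := by positivity
    set u : ℝ := (lam - ω)/ω with hudef
    have hu0 : u ≠ 0 := div_ne_zero h1 hω'
    have hu : |u| ≤ 1/2 := by
      rw [hudef, abs_div, abs_of_pos hω]; exact hnear
    have hul : -(1/2 : ℝ) ≤ u := (abs_le.1 hu).1
    have hur : u ≤ (1/2 : ℝ) := (abs_le.1 hu).2
    have hlamu : lam = ω*(1+u) := by rw [hudef]; field_simp; ring
    have h1u' : (0:ℝ) < 1+u := by linarith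
    have h1u : (1:ℝ)+u ≠ 0 := h1u'.ne'
    have h2u : (0:ℝ) < 2+u := by linarith
    have e1 : (lam - ω)*T = lam*T - 2*π := by rw [← hωT]; ring
    have e2 : (lam + ω)*T = lam*T + 2*π := by rw [← hωT]; ring
    set s : ℝ := Real.sin (lam*T) with hsdef
    set c : ℝ := Real.cos (lam*T) with hcdef
    set K : ℝ := 1/(2*(lam-ω)) + 1/(2*(lam+ω)) - 1/(4*lam) with hKdef
    have hβv : β lam = (2/T) * (s * K) := by
      rw [hβ, intBeta ω lam T h1 h2 hlam0.ne', e1, e2, Real.sin_sub_two_pi,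
        Real.sin_add_two_pi, hKdef]
      ring
    have hγv : γ lam = (2/T) * ((1-c) * K) := by
      rw [hγ, intGamma ω lam T h1 h2 hlam0.ne', e1, e2, Real.cos_sub_two_pi,
        Real.cos_add_two_pi, hKdef]
      ring
    have hθ : lam*T/2 = π*u + π := by
      rw [hlamu, hT]; field_simp; ring
    have hsin2 : 1 - c = 2 * Real.sin (π*u)^2 := by
      have hc2 : c = Real.cos (2*(lam*T/2)) := by rw [hcdef]; ring_nf
      rw [hc2, Real.cos_two_mul', hθ, Real.sin_add_pi, Real.cos_add_pi]
      linear_combination -Real.sin_sq_add_cos_sq (π*u)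
    have hs2 : s^2 = 1 - c^2 := by
      have := Real.sin_sq_add_cos_sq (lam*T); linarith
    have hval2 : s^2 + (1-c)^2 = 4 * Real.sin (π*u)^2 := by
      linear_combination hs2 + 2*hsin2
    -- key inequality squared
    have hk := key_ineq u hu0 hu
    have hA0 : (0:ℝ) < 3*(1+u)^2+1 := by positivity
    have hL0 : (0:ℝ) ≤ (3*(1+u)^2+1) * |Real.sin (π*u)| := by positivity
    have hk2 : (3*(1+u)^2+1)^2 * Real.sin (π*u)^2
        ≤ (2*π*(1+u)*u*(2+u))^2 * (1 - (15/32)*u^2)^2 := by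
      calc (3*(1+u)^2+1)^2 * Real.sin (π*u)^2
          = ((3*(1+u)^2+1) * |Real.sin (π*u)|)^2 := by rw [mul_pow, sq_abs]
        _ ≤ ((2*π*(1+u)*(abs u)*(2+u)) * (1 - (15/32)*u^2))^2 :=
            pow_le_pow_left₀ hL0 hk 2
        _ = (2*π*(1+u)*u*(2+u))^2 * (1 - (15/32)*u^2)^2 := by
            linear_combination ((2*π*(1+u)*(2+u))^2 * (1 - (15/32)*u^2)^2) * (sq_abs u)
    -- the algebraic identity
    have hB0 : 2*π*(1+u)*u*(2+u) ≠ 0 := by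
      apply mul_ne_zero (mul_ne_zero (mul_ne_zero (mul_ne_zero two_ne_zero
        Real.pi_ne_zero) h1u) hu0) h2u.ne'
    have hB2 : (0:ℝ) < (2*π*(1+u)*u*(2+u))^2 :=
      lt_of_le_of_ne (sq_nonneg _) (Ne.symm (pow_ne_zero 2 hB0))
    have hlmw : lam - ω = ω*u := by rw [hlamu]; ring
    have hlpw : lam + ω = ω*(2+u) := by rw [hlamu]; ring
    have hid : (2/T)^2 * K^2 * 4 * (2*π*(1+u)*u*(2+u))^2 = (3*(1+u)^2+1)^2 := by
      rw [hKdef, hlmw, hlpw, hlamu, hT]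
      field_simp
      ring
    -- combine
    have hval : (β lam)^2 + (γ lam)^2 = (2/T)^2*K^2*4*Real.sin (π*u)^2 := by
      rw [hβv, hγv]
      linear_combination ((2/T)^2*K^2) * hval2
    have hXB : ((2/T)^2*K^2*4*Real.sin (π*u)^2) * (2*π*(1+u)*u*(2+u))^2
        ≤ ((1 - (15/32)*u^2)^2) * (2*π*(1+u)*u*(2+u))^2 := by
      calc ((2/T)^2*K^2*4*Real.sin (π*u)^2) * (2*π*(1+u)*u*(2+u))^2
          = (3*(1+u)^2+1)^2 * Real.sin (π*u)^2 := by
            linear_combination Real.sin (π*u)^2 * hid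
        _ ≤ (2*π*(1+u)*u*(2+u))^2 * (1 - (15/32)*u^2)^2 := hk2
        _ = ((1 - (15/32)*u^2)^2) * (2*π*(1+u)*u*(2+u))^2 := by ring
    have hfin : (β lam)^2 + (γ lam)^2 ≤ (1 - (15/32)*u^2)^2 := by
      rw [hval]
      exact le_of_mul_le_mul_right hXB hB2
    have hu2 : u^2 ≤ 1/4 := by
      calc u^2 = |u|^2 := (sq_abs u).symm
        _ ≤ (1/2)^2 := pow_le_pow_left₀ (abs_nonneg u) hu 2
        _ = 1/4 := by norm_num
    have hR0 : (0:ℝ) < 1 - (15/32)*u^2 := by linarith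
    have hμv : μ lam = (β lam : ℂ) + (γ lam : ℂ) * Complex.I := by rw [hμ]; ring
    rw [hμv, Complex.norm_add_mul_I,
      show (1:ℝ) - 15/32 * ((lam-ω)/ω)^2 = 1 - (15/32)*u^2 by rw [hudef]]
    calc Real.sqrt ((β lam)^2 + (γ lam)^2)
        ≤ Real.sqrt ((1 - (15/32)*u^2)^2) := Real.sqrt_le_sqrt hfin
      _ = 1 - (15/32)*u^2 := Real.sqrt_sq hR0.le
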